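/- arXiv:1204.1196 — 4 statements merged into one kernel-verified Lean document; each statement's English description precedes it below -/
import Mathlib

section
/- Let φ ∈ MHL(□,↓,@) be a monotone hybrid formula, let g be a partial assignment defined on all state variables free in φ, and let n_g = 1 + max of the values of g. Then for every i ∈ ℕ: g,i ⊨ □φ over (ℕ,<) if and only if g,n_g ⊨ φ. -/
/-- Formulas of monotone hybrid logic MHL(□,↓,@) over state variables. -/
inductive HForm : Type
  | svar : ℕ → HForm
  | top : HForm
  | bot : HForm
  | conj : HForm → HForm → HForm
  | disj : HForm → HForm → HForm
  | box : HForm → HForm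
  | bind : ℕ → HForm → HForm
  | at_ : ℕ → HForm → HForm

/-- Satisfaction over the frame (ℕ,<) with assignment g. -/
def sat (g : ℕ → ℕ) (k : ℕ) : HForm → Prop
  | .svar x => g x = k
  | .top => True
  | .bot => False
  | .conj a b => sat g k a ∧ sat g k b
  | .disj a b => sat g k a ∨ sat g k b
  | .box a => ∀ k' > k, sat g k' a
  | .bind x a => sat (Function.update g x k) k a
  | .at_ x a => sat g (g x) a

/-- The state variables occurring free in a formula (subscripts of @ included). -/
def free : HForm → Finset ℕ
  | .svar x => {x}
  | .top => ∅
  | .bot => ∅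
  | .conj a b => free a ∪ free b
  | .disj a b => free a ∪ free b
  | .box a => free a
  | .bind x a => (free a).erase x
  | .at_ x a => insert x (free a)

/-- Simulation lemma: if there is a finite, left-functional set `L` of pairs of points
relating the two configurations (all values of the assignments on a set `W` of variables
containing the free variables, and the pair of evaluation points), then satisfaction
transfers from the left configuration to the right one. -/
theorem gen_sim (φ : HForm) :
    ∀ (g1 g2 : ℕ → ℕ) (j k : ℕ) (W : Finset ℕ) (L : Finset (ℕ × ℕ)),
      free φ ⊆ W → (∀ y ∈ W, (g1 y, g2 y) ∈ L) → (j, k) ∈ L →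
      (∀ p q q', (p, q) ∈ L → (p, q') ∈ L → q = q') →
      sat g1 j φ → sat g2 k φ := by
  induction φ with
  | svar x =>
    intro g1 g2 j k W L hfree hW hjk hLF hsat
    have hx : x ∈ W := hfree (by simp [free])
    have hmem : (g1 x, g2 x) ∈ L := hW x hx
    have hj : g1 x = j := hsat
    rw [hj] at hmem
    exact hLF j (g2 x) k hmem hjk
  | top =>
    intro g1 g2 j k W L hfree hW hjk hLF hsat
    trivial
  | bot =>
    intro g1 g2 j k W L hfree hW hjk hLF hsat
    exact hsat.elim
  | conj a b iha ihb =>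
    intro g1 g2 j k W L hfree hW hjk hLF hsat
    have hfa : free a ⊆ W := fun y hy => hfree (by simp [free, hy])
    have hfb : free b ⊆ W := fun y hy => hfree (by simp [free, hy])
    exact ⟨iha g1 g2 j k W L hfa hW hjk hLF hsat.1,
           ihb g1 g2 j k W L hfb hW hjk hLF hsat.2⟩
  | disj a b iha ihb =>
    intro g1 g2 j k W L hfree hW hjk hLF hsat
    have hfa : free a ⊆ W := fun y hy => hfree (by simp [free, hy])
    have hfb : free b ⊆ W := fun y hy => hfree (by simp [free, hy])
    rcases hsat with h | h
    · exact Or.inl (iha g1 g2 j k W L hfa hW hjk hLF h)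
    · exact Or.inr (ihb g1 g2 j k W L hfb hW hjk hLF h)
  | box a ih =>
    intro g1 g2 j k W L hfree hW hjk hLF hsat
    intro k' hk'
    set j' : ℕ := L.sup Prod.fst + 1 with hj'def
    have hsup : ∀ pq ∈ L, pq.1 ≤ L.sup Prod.fst := fun pq hpq => Finset.le_sup hpq
    have hjlt : j < j' := lt_of_le_of_lt (hsup (j, k) hjk) (Nat.lt_succ_self _)
    have hL' : ∀ y ∈ W, (g1 y, g2 y) ∈ insert (j', k') L :=
      fun y hy => Finset.mem_insert_of_mem (hW y hy)
    have hLF' : ∀ p q q', (p, q) ∈ insert (j', k') L → (p, q') ∈ insert (j', k') L →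
        q = q' := by
      intro p q q' h1 h2
      rcases Finset.mem_insert.mp h1 with h1 | h1 <;>
        rcases Finset.mem_insert.mp h2 with h2 | h2
      · rw [Prod.mk.injEq] at h1 h2
        rw [h1.2, h2.2]
      · exfalso
        have := hsup (p, q') h2
        rw [Prod.mk.injEq] at h1
        omega
      · exfalso
        have := hsup (p, q) h1
        rw [Prod.mk.injEq] at h2
        omega
      · exact hLF p q q' h1 h2
    exact ih g1 g2 j' k' W (insert (j', k') L) hfree hL'
      (Finset.mem_insert_self _ _) hLF' (hsat j' hjlt)
  | bind x a ih =>
    intro g1 g2 j k W L hfree hW hjk hLF hsat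
    have hfa : free a ⊆ insert x W := by
      intro y hy
      by_cases hxy : y = x
      · exact hxy ▸ Finset.mem_insert_self _ _
      · exact Finset.mem_insert_of_mem (hfree (Finset.mem_erase.mpr ⟨hxy, hy⟩))
    have hW' : ∀ y ∈ insert x W,
        ((Function.update g1 x j) y, (Function.update g2 x k) y) ∈ L := by
      intro y hy
      by_cases hxy : y = x
      · subst hxy
        simp only [Function.update_self]
        exact hjk
      · rw [Function.update_of_ne hxy, Function.update_of_ne hxy]
        exact hW y ((Finset.mem_insert.mp hy).resolve_left hxy)
    exact ih (Function.update g1 x j) (Function.update g2 x k) j k (insert x W) L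
      hfa hW' hjk hLF hsat
  | at_ x a ih =>
    intro g1 g2 j k W L hfree hW hjk hLF hsat
    have hx : x ∈ W := hfree (by simp [free])
    have hfa : free a ⊆ W := fun y hy => hfree (by simp [free, hy])
    exact ih g1 g2 (g1 x) (g2 x) W L hfa hW (hW x hx) hLF hsat

/-- Lemma: for a partial assignment g defined on a finite set V of variables containing
all free variables of φ, and n_g = max{g(x) : x ∈ V} + 1, we have
g,i ⊨ □φ iff g,n_g ⊨ φ over (ℕ,<). -/
theorem stmt5 (φ : HForm) (g : ℕ → ℕ) (V : Finset ℕ) (hV : free φ ⊆ V) (i : ℕ) :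
    sat g i (.box φ) ↔ sat g (V.sup g + 1) φ := by
  set n : ℕ := V.sup g + 1 with hn
  have hsmall : ∀ y ∈ V, g y < n := by
    intro y hy
    have : g y ≤ V.sup g := Finset.le_sup hy
    omega
  have diagLF : ∀ (a b : ℕ),
      (∀ y ∈ V, g y ≠ a) →
      ∀ p q q', (p, q) ∈ insert (a, b) (V.image fun y => (g y, g y)) →
        (p, q') ∈ insert (a, b) (V.image fun y => (g y, g y)) → q = q' := by
    intro a b ha p q q' h1 h2
    rcases Finset.mem_insert.mp h1 with h1 | h1 <;>
      rcases Finset.mem_insert.mp h2 with h2 | h2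
    · rw [Prod.mk.injEq] at h1 h2
      rw [h1.2, h2.2]
    · exfalso
      rw [Prod.mk.injEq] at h1
      obtain ⟨y, hy, hEq⟩ := Finset.mem_image.mp h2
      rw [Prod.mk.injEq] at hEq
      exact ha y hy (hEq.1.trans h1.1)
    · exfalso
      rw [Prod.mk.injEq] at h2
      obtain ⟨y, hy, hEq⟩ := Finset.mem_image.mp h1
      rw [Prod.mk.injEq] at hEq
      exact ha y hy (hEq.1.trans h2.1)
    · obtain ⟨y, hy, hEq⟩ := Finset.mem_image.mp h1
      obtain ⟨z, hz, hEq'⟩ := Finset.mem_image.mp h2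
      rw [Prod.mk.injEq] at hEq hEq'
      rw [← hEq.2, ← hEq'.2, hEq.1, ← hEq'.1]
  constructor
  · intro h
    set P : ℕ := max n (i + 1) with hP
    have hPn : n ≤ P := le_max_left _ _
    have hPi : i < P := lt_of_lt_of_le (Nat.lt_succ_self i) (le_max_right _ _)
    have hsatP : sat g P φ := h P hPi
    refine gen_sim φ g g P n V (insert (P, n) (V.image fun y => (g y, g y))) hV
      (fun y hy => Finset.mem_insert_of_mem (Finset.mem_image_of_mem _ hy))
      (Finset.mem_insert_self _ _) ?_ hsatP
    exact diagLF P n (fun y hy => by have := hsmall y hy; omega)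
  · intro h k' hk'
    by_cases hkn : k' = n
    · exact hkn ▸ h
    refine gen_sim φ g g n k' V (insert (n, k') (V.image fun y => (g y, g y))) hV
      (fun y hy => Finset.mem_insert_of_mem (Finset.mem_image_of_mem _ hy))
      (Finset.mem_insert_self _ _) ?_ h
    exact diagLF n k' (fun y hy => by have := hsmall y hy; omega)
end

section
/- Let φ ∈ MHL(□,↓,@) be a monotone hybrid formula, let i,j ∈ ℕ, and let g,h be partial assignments defined on all state variables free in φ such that (1) every free variable of φ mapped to i by g is mapped to j by h, and (2) whenever g maps two free variables of φ to the same value, so does h. Then g,i ⊨ φ implies h,j ⊨ φ over the frame (ℕ,<). -/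
/-- If (1) every free variable of φ mapped to i by g is mapped to j by h, and
(2) whenever g identifies two free variables of φ so does h, then g,i ⊨ φ implies
h,j ⊨ φ over (ℕ,<). -/
theorem stmt6 (φ : HForm) (i j : ℕ) (g h : ℕ → ℕ)
    (h1 : ∀ x ∈ free φ, g x = i → h x = j)
    (h2 : ∀ a ∈ free φ, ∀ b ∈ free φ, g a = g b → h a = h b)
    (hsat : sat g i φ) : sat h j φ := by
  induction φ generalizing i j g h with
  | svar x => exact h1 x (by simp [free]) hsat
  | top => trivial
  | bot => exact hsat.elim
  | conj a b iha ihb =>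
    exact ⟨iha i j g h (fun x hx => h1 x (by simp [free, hx]))
        (fun p hp q hq => h2 p (by simp [free, hp]) q (by simp [free, hq])) hsat.1,
      ihb i j g h (fun x hx => h1 x (by simp [free, hx]))
        (fun p hp q hq => h2 p (by simp [free, hp]) q (by simp [free, hq])) hsat.2⟩
  | disj a b iha ihb =>
    rcases hsat with hs | hs
    · exact Or.inl (iha i j g h (fun x hx => h1 x (by simp [free, hx]))
        (fun p hp q hq => h2 p (by simp [free, hp]) q (by simp [free, hq])) hs)
    · exact Or.inr (ihb i j g h (fun x hx => h1 x (by simp [free, hx]))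
        (fun p hp q hq => h2 p (by simp [free, hp]) q (by simp [free, hq])) hs)
  | box a ih =>
    intro k' _
    apply ih (max i ((free a).sup g) + 1) k' g h
    · intro x hx hgx
      have : g x ≤ (free a).sup g := Finset.le_sup hx
      omega
    · exact h2
    · exact hsat _ (by omega)
  | bind x a ih =>
    apply ih i j (Function.update g x i) (Function.update h x j)
    · intro y hy hgy
      by_cases hxy : y = x
      · subst hxy; simp
      · simp only [Function.update_of_ne hxy] at hgy ⊢
        exact h1 y (Finset.mem_erase.mpr ⟨hxy, hy⟩) hgy
    · intro p hp q hq hpq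
      by_cases hpx : p = x <;> by_cases hqx : q = x
      · subst hpx; subst hqx; rfl
      · subst hpx
        simp only [Function.update_self, Function.update_of_ne hqx] at hpq ⊢
        exact (h1 q (Finset.mem_erase.mpr ⟨hqx, hq⟩) hpq.symm).symm
      · subst hqx
        simp only [Function.update_self, Function.update_of_ne hpx] at hpq ⊢
        exact h1 p (Finset.mem_erase.mpr ⟨hpx, hp⟩) hpq
      · simp only [Function.update_of_ne hpx, Function.update_of_ne hqx] at hpq ⊢
        exact h2 p (Finset.mem_erase.mpr ⟨hpx, hp⟩) q (Finset.mem_erase.mpr ⟨hqx, hq⟩) hpq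
    · exact hsat
  | at_ x a ih =>
    apply ih (g x) (h x) g h
    · intro y hy hgy
      exact h2 y (by simp [free, hy]) x (by simp [free]) hgy
    · intro p hp q hq hpq
      exact h2 p (by simp [free, hp]) q (by simp [free, hq]) hpq
    · exact hsat
end

section
/- Let φ ∈ MHL(□,↓,@), let g be a partial assignment defined on all free variables of φ, and let i ∈ ℕ be such that no free variable of φ is mapped to i by g. Then over (ℕ,<), g,i ⊨ φ implies g,j ⊨ φ for every j ∈ ℕ. -/
theorem key : ∀ (φ : HForm) (g g' : ℕ → ℕ) (k k' : ℕ),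
    (∀ x ∈ free φ, g x = k → g' x = k') →
    (∀ x ∈ free φ, ∀ y ∈ free φ, g x = g y → g' x = g' y) →
    sat g k φ → sat g' k' φ := by
  intro φ
  induction φ with
  | svar x =>
    intro g g' k k' h1 _ hs
    exact h1 x (Finset.mem_singleton_self x) hs
  | top => intro _ _ _ _ _ _ _; trivial
  | bot => intro _ _ _ _ _ _ hs; exact hs.elim
  | conj a b iha ihb =>
    intro g g' k k' h1 h2 hs
    exact ⟨iha g g' k k' (fun x hx => h1 x (Finset.mem_union_left _ hx))
        (fun x hx y hy => h2 x (Finset.mem_union_left _ hx) y (Finset.mem_union_left _ hy))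
        hs.1,
      ihb g g' k k' (fun x hx => h1 x (Finset.mem_union_right _ hx))
        (fun x hx y hy => h2 x (Finset.mem_union_right _ hx) y (Finset.mem_union_right _ hy))
        hs.2⟩
  | disj a b iha ihb =>
    intro g g' k k' h1 h2 hs
    rcases hs with hs | hs
    · exact Or.inl (iha g g' k k' (fun x hx => h1 x (Finset.mem_union_left _ hx))
        (fun x hx y hy => h2 x (Finset.mem_union_left _ hx) y (Finset.mem_union_left _ hy)) hs)
    · exact Or.inr (ihb g g' k k' (fun x hx => h1 x (Finset.mem_union_right _ hx))
        (fun x hx y hy => h2 x (Finset.mem_union_right _ hx) y (Finset.mem_union_right _ hy)) hs)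
  | box a ih =>
    intro g g' k k' _ h2 hs
    intro m' _
    set m : ℕ := (free a).sup g + k + 1 with hm
    have hmk : m > k := by omega
    refine ih g g' m m' ?_ h2 (hs m hmk)
    intro x hx hgx
    exfalso
    have : g x ≤ (free a).sup g := Finset.le_sup hx
    omega
  | bind x a ih =>
    intro g g' k k' h1 h2 hs
    refine ih (Function.update g x k) (Function.update g' x k') k k' ?_ ?_ hs
    · intro y hy hgy
      by_cases hyx : y = x
      · subst hyx; simp [Function.update_self]
      · rw [Function.update_of_ne hyx] at hgy ⊢
        exact h1 y (Finset.mem_erase.mpr ⟨hyx, hy⟩) hgy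
    · intro y hy z hz heq
      by_cases hyx : y = x <;> by_cases hzx : z = x
      · subst hyx; subst hzx; rfl
      · subst hyx
        rw [Function.update_self] at heq
        rw [Function.update_of_ne hzx] at heq ⊢
        rw [Function.update_self]
        exact (h1 z (Finset.mem_erase.mpr ⟨hzx, hz⟩) heq.symm).symm
      · subst hzx
        rw [Function.update_self] at heq
        rw [Function.update_of_ne hyx] at heq ⊢
        rw [Function.update_self]
        exact h1 y (Finset.mem_erase.mpr ⟨hyx, hy⟩) heq
      · rw [Function.update_of_ne hyx, Function.update_of_ne hzx] at heq ⊢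
        exact h2 y (Finset.mem_erase.mpr ⟨hyx, hy⟩) z (Finset.mem_erase.mpr ⟨hzx, hz⟩) heq
  | at_ x a ih =>
    intro g g' k k' _ h2 hs
    refine ih g g' (g x) (g' x) ?_ ?_ hs
    · intro y hy hgy
      exact h2 y (Finset.mem_insert_of_mem hy) x (Finset.mem_insert_self _ _) hgy
    · intro y hy z hz
      exact h2 y (Finset.mem_insert_of_mem hy) z (Finset.mem_insert_of_mem hz)

/-- If no free variable of φ is mapped to i by g, then g,i ⊨ φ implies g,j ⊨ φ for
every j, over (ℕ,<). -/
theorem stmt7 (φ : HForm) (g : ℕ → ℕ) (i : ℕ)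
    (hi : ∀ x ∈ free φ, g x ≠ i)
    (hsat : sat g i φ) : ∀ j : ℕ, sat g j φ := by
  intro j
  exact key φ g g i j (fun x hx h => absurd h (hi x hx)) (fun _ _ _ _ h => h) hsat
end

section
/- A monotone hybrid formula φ ∈ MHL(□,↓,@) is satisfiable over the frame (ℕ,<) (there exist a partial assignment g for φ and i ∈ ℕ with g,i ⊨ φ) if and only if g₀^φ, 0 ⊨ φ, where g₀^φ is the canonical assignment mapping every variable free in φ to 0. -/
lemma sat_rel (φ : HForm) : ∀ (g g' : ℕ → ℕ) (i j : ℕ),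
    sat g i φ →
    (∀ x ∈ free φ, g x = i → g' x = j) →
    (∀ x ∈ free φ, ∀ y ∈ free φ, g x = g y → g' x = g' y) →
    sat g' j φ := by
  induction φ with
  | svar x =>
      intro g g' i j h h1 _
      exact h1 x (by simp [free]) h
  | top => intro _ _ _ _ _ _ _; trivial
  | bot => intro _ _ _ _ h; exact h.elim
  | conj a b iha ihb =>
      intro g g' i j h h1 h2
      refine ⟨iha g g' i j h.1 ?_ ?_, ihb g g' i j h.2 ?_ ?_⟩ <;>
        first
        | (intro x hx; exact h1 x (by simp [free, hx]))
        | (intro x hx y hy; exact h2 x (by simp [free, hx]) y (by simp [free, hy]))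
  | disj a b iha ihb =>
      intro g g' i j h h1 h2
      rcases h with h | h
      · exact Or.inl (iha g g' i j h
          (fun x hx => h1 x (by simp [free, hx]))
          (fun x hx y hy => h2 x (by simp [free, hx]) y (by simp [free, hy])))
      · exact Or.inr (ihb g g' i j h
          (fun x hx => h1 x (by simp [free, hx]))
          (fun x hx y hy => h2 x (by simp [free, hy, hx]) y (by simp [free, hy])))
  | box a ih =>
      intro g g' i j h h1 h2
      intro k'' hk''
      set m := ((free a).sup g) ⊔ i with hm
      have hsat : sat g (m + 1) a := h (m + 1) (by
        have : i ≤ m := le_sup_right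
        omega)
      refine ih g g' (m + 1) k'' hsat ?_ ?_
      · intro x hx hgx
        exfalso
        have hle : g x ≤ (free a).sup g := Finset.le_sup hx
        have : (free a).sup g ≤ m := le_sup_left
        omega
      · intro x hx y hy
        exact h2 x (by simpa [free] using hx) y (by simpa [free] using hy)
  | bind x a ih =>
      intro g g' i j h h1 h2
      show sat (Function.update g' x j) j a
      refine ih (Function.update g x i) (Function.update g' x j) i j h ?_ ?_
      · intro y hy hgy
        by_cases hxy : y = x
        · subst hxy; simp [Function.update_self]
        · rw [Function.update_of_ne hxy] at hgy
          rw [Function.update_of_ne hxy]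
          exact h1 y (by simp [free, Finset.mem_erase, hxy, hy]) hgy
      · intro y hy z hz heq
        by_cases hyx : y = x <;> by_cases hzx : z = x
        · subst hyx; subst hzx; rfl
        · subst hyx
          rw [Function.update_self] at heq ⊢
          rw [Function.update_of_ne hzx] at heq ⊢
          exact (h1 z (by simp [free, Finset.mem_erase, hzx, hz]) heq.symm).symm
        · subst hzx
          rw [Function.update_self] at heq ⊢
          rw [Function.update_of_ne hyx] at heq ⊢
          exact h1 y (by simp [free, Finset.mem_erase, hyx, hy]) heq
        · rw [Function.update_of_ne hyx, Function.update_of_ne hzx] at heq ⊢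
          exact h2 y (by simp [free, Finset.mem_erase, hyx, hy])
            z (by simp [free, Finset.mem_erase, hzx, hz]) heq
  | at_ x a ih =>
      intro g g' i j h h1 h2
      show sat g' (g' x) a
      refine ih g g' (g x) (g' x) h ?_ ?_
      · intro y hy hgy
        exact h2 y (by simp [free, hy]) x (by simp [free]) hgy
      · intro y hy z hz
        exact h2 y (by simp [free, hy]) z (by simp [free, hz])

/-- φ ∈ MHL(□,↓,@) is satisfiable over (ℕ,<) iff g₀^φ,0 ⊨ φ, where the canonical
assignment g₀^φ maps every (free) variable to 0. -/
theorem stmt8 (φ : HForm) :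
    (∃ (g : ℕ → ℕ) (i : ℕ), sat g i φ) ↔ sat (fun _ => 0) 0 φ := by
  constructor
  · rintro ⟨g, i, h⟩
    exact sat_rel φ g (fun _ => 0) i 0 h (fun _ _ _ => rfl) (fun _ _ _ _ _ => rfl)
  · intro h
    exact ⟨fun _ => 0, 0, h⟩
end
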